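/- Let I ⊆ ℝ be a compact interval with normalized Lebesgue measure Θ_I, and let A ⊆ [1,∞) × I be measurable. Suppose that for every sequence (τ_n) of Borel probability measures on [1,∞) converging weak* to the Dirac mass at +∞ we have (τ_n × Θ_I)(A) → 0. Then for Lebesgue-almost every θ ∈ I, liminf_{T→∞} (1/T)·Leb{t ∈ [1,T] : (t,θ) ∈ A} = 0. -/

import Mathlib

open MeasureTheory Filter
open scoped ENNReal

theorem stmt17 (c d : ℝ) (hcd : c < d)
    (A : Set (ℝ × ℝ)) (hAmeas : MeasurableSet A)
    (hAsub : A ⊆ Set.Ici (1:ℝ) ×ˢ Set.Icc c d)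
    (h : ∀ τ : ℕ → Measure ℝ, (∀ n, IsProbabilityMeasure (τ n)) →
      (∀ n, τ n (Set.Ici (1:ℝ)) = 1) →
      (∀ M : ℝ, Tendsto (fun n => τ n (Set.Icc 1 M)) atTop (nhds 0)) →
      Tendsto (fun n => ((τ n).prod ((volume (Set.Icc c d))⁻¹ • volume.restrict (Set.Icc c d))) A)
        atTop (nhds 0)) :
    ∀ᵐ θ ∂(volume.restrict (Set.Icc c d)),
      Filter.liminf
        (fun T : ℝ => (volume {t : ℝ | t ∈ Set.Icc 1 T ∧ (t, θ) ∈ A}).toReal / T) atTop = 0 := by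
  set ν := volume.restrict (Set.Icc c d) with hν
  set k : ℝ≥0∞ := (volume (Set.Icc c d))⁻¹ with hk
  have hvol : volume (Set.Icc c d) = ENNReal.ofReal (d - c) := Real.volume_Icc
  have hvol0 : volume (Set.Icc c d) ≠ 0 := by
    rw [hvol]; simp only [ne_eq, ENNReal.ofReal_eq_zero, not_le]; linarith
  have hvoltop : volume (Set.Icc c d) ≠ ⊤ := by rw [hvol]; exact ENNReal.ofReal_ne_top
  set τ : ℕ → Measure ℝ :=
    fun n => ((n : ℝ≥0∞) + 1)⁻¹ • volume.restrict (Set.Icc 1 ((n : ℝ) + 2)) with hτ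
  have hτIcc : ∀ n : ℕ, volume (Set.Icc (1:ℝ) ((n:ℝ)+2)) = (n:ℝ≥0∞)+1 := by
    intro n
    rw [Real.volume_Icc, show (n:ℝ)+2-1 = (n:ℝ)+1 by ring,
      ENNReal.ofReal_add (by positivity) zero_le_one]
    simp
  have hne : ∀ n : ℕ, ((n:ℝ≥0∞)+1) ≠ 0 := fun n => by simp
  have hnetop : ∀ n : ℕ, ((n:ℝ≥0∞)+1) ≠ ⊤ := fun n => by
    simp [ENNReal.add_ne_top, ENNReal.natCast_ne_top]
  have hprob : ∀ n, IsProbabilityMeasure (τ n) := by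
    intro n
    constructor
    rw [hτ]
    simp only [Measure.smul_apply, smul_eq_mul,
      Measure.restrict_apply MeasurableSet.univ, Set.univ_inter, hτIcc n]
    exact ENNReal.inv_mul_cancel (hne n) (hnetop n)
  have hIci : ∀ n, τ n (Set.Ici (1:ℝ)) = 1 := by
    intro n
    rw [hτ]
    simp only [Measure.smul_apply, smul_eq_mul, Measure.restrict_apply measurableSet_Ici]
    rw [Set.inter_eq_self_of_subset_right (Set.Icc_subset_Ici_self), hτIcc n]
    exact ENNReal.inv_mul_cancel (hne n) (hnetop n)
  have hM : ∀ M : ℝ, Tendsto (fun n => τ n (Set.Icc 1 M)) atTop (nhds 0) := by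
    intro M
    have hb : ∀ n : ℕ, τ n (Set.Icc 1 M) ≤ ((n:ℝ≥0∞)+1)⁻¹ * ENNReal.ofReal (M-1) := by
      intro n
      rw [hτ]
      simp only [Measure.smul_apply, smul_eq_mul, Measure.restrict_apply measurableSet_Icc]
      gcongr
      calc volume (Set.Icc 1 M ∩ Set.Icc 1 ((n:ℝ)+2)) ≤ volume (Set.Icc (1:ℝ) M) :=
            measure_mono Set.inter_subset_left
        _ = ENNReal.ofReal (M-1) := Real.volume_Icc
    have h1 : Tendsto (fun n : ℕ => ((n:ℝ≥0∞)+1)⁻¹) atTop (nhds 0) := by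
      have := ENNReal.tendsto_inv_nat_nhds_zero.comp (tendsto_add_atTop_nat 1)
      simpa [Function.comp_def, Nat.cast_add, Nat.cast_one] using this
    have h0 : Tendsto (fun n : ℕ => ((n:ℝ≥0∞)+1)⁻¹ * ENNReal.ofReal (M-1)) atTop (nhds 0) := by
      have := ENNReal.Tendsto.mul_const (b := ENNReal.ofReal (M-1)) h1 (Or.inr ENNReal.ofReal_ne_top)
      simpa using this
    exact tendsto_of_tendsto_of_tendsto_of_le_of_le tendsto_const_nhds h0
      (fun n => zero_le) hb
  have hconv := h τ hprob hIci hM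
  set g : ℕ → ℝ → ℝ≥0∞ :=
    fun n θ => ((n:ℝ≥0∞)+1)⁻¹ * volume {t : ℝ | t ∈ Set.Icc 1 ((n:ℝ)+2) ∧ (t, θ) ∈ A} with hg
  have hAn : ∀ n : ℕ, MeasurableSet (A ∩ (Set.Icc (1:ℝ) ((n:ℝ)+2) ×ˢ (Set.univ : Set ℝ))) :=
    fun n => hAmeas.inter (measurableSet_Icc.prod MeasurableSet.univ)
  have hsetEq : ∀ (n : ℕ) (θ : ℝ),
      (fun t => (t, θ)) ⁻¹' (A ∩ Set.Icc (1:ℝ) ((n:ℝ)+2) ×ˢ (Set.univ : Set ℝ)) =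
        {t : ℝ | t ∈ Set.Icc 1 ((n:ℝ)+2) ∧ (t, θ) ∈ A} := by
    intro n θ; ext t; simp [and_comm]
  have hgmeas : ∀ n, Measurable (g n) := by
    intro n
    apply Measurable.const_mul
    have := measurable_measure_prodMk_right (μ := (volume : Measure ℝ)) (hAn n)
    simp only [hsetEq n] at this
    exact this
  have key : ∀ n, ((τ n).prod (k • ν)) A = k * ∫⁻ θ, g n θ ∂ν := by
    intro n
    rw [Measure.prod_apply_symm hAmeas, lintegral_smul_measure]
    congr 1
    apply lintegral_congr
    intro θ
    rw [hτ]
    simp only [Measure.smul_apply, smul_eq_mul]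
    rw [Measure.restrict_apply (show MeasurableSet ((fun x => (x, θ)) ⁻¹' A) from
      hAmeas.preimage (measurable_id.prodMk measurable_const)), hg]
    congr 2
    ext t; simp only [Set.mem_inter_iff, Set.mem_preimage, Set.mem_setOf_eq]; tauto
  have hconv2 : Tendsto (fun n => k * ∫⁻ θ, g n θ ∂ν) atTop (nhds 0) := by
    simpa only [key] using hconv
  have hk0 : k ≠ 0 := ENNReal.inv_ne_zero.mpr hvoltop
  have hktop : k ≠ ⊤ := ENNReal.inv_ne_top.mpr hvol0
  have hconv3 : Tendsto (fun n => ∫⁻ θ, g n θ ∂ν) atTop (nhds 0) := by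
    have h2 := ENNReal.Tendsto.const_mul (a := k⁻¹) hconv2
      (Or.inr (ENNReal.inv_ne_top.mpr hk0))
    simp only [mul_zero] at h2
    have h3 : ∀ n, k⁻¹ * (k * ∫⁻ θ, g n θ ∂ν) = ∫⁻ θ, g n θ ∂ν := by
      intro n
      rw [← mul_assoc, ENNReal.inv_mul_cancel hk0 hktop, one_mul]
    simpa only [h3] using h2
  have hliminf0 : ∀ᵐ θ ∂ν, liminf (fun n => g n θ) atTop = 0 := by
    have hF := lintegral_liminf_le (μ := ν) (u := atTop) hgmeas
    rw [hconv3.liminf_eq] at hF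
    have h0 : ∫⁻ θ, liminf (fun n => g n θ) atTop ∂ν = 0 := le_antisymm hF zero_le
    have hae := (lintegral_eq_zero_iff (Measurable.liminf hgmeas)).mp h0
    filter_upwards [hae] with θ hθ using hθ
  filter_upwards [hliminf0] with θ hθ
  set F : ℝ → ℝ := fun T => (volume {t : ℝ | t ∈ Set.Icc 1 T ∧ (t, θ) ∈ A}).toReal / T with hF
  have hempty : ∀ T : ℝ, T < 1 → {t : ℝ | t ∈ Set.Icc 1 T ∧ (t, θ) ∈ A} = ∅ := by
    intro T hT
    ext t
    simp only [Set.mem_setOf_eq, Set.mem_empty_iff_false, iff_false, Set.mem_Icc]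
    rintro ⟨⟨h1, h2⟩, -⟩; linarith
  have hF0 : ∀ T, 0 ≤ F T := by
    intro T
    rcases le_or_gt 1 T with hT | hT
    · exact div_nonneg ENNReal.toReal_nonneg (by linarith)
    · show 0 ≤ (volume {t : ℝ | t ∈ Set.Icc 1 T ∧ (t, θ) ∈ A}).toReal / T
      rw [hempty T hT]
      simp
  have hF1 : ∀ T, F T ≤ 1 := by
    intro T
    rcases le_or_gt 1 T with hT | hT
    · have hvle : volume {t : ℝ | t ∈ Set.Icc 1 T ∧ (t, θ) ∈ A} ≤ ENNReal.ofReal (T-1) := by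
        calc volume {t : ℝ | t ∈ Set.Icc 1 T ∧ (t, θ) ∈ A} ≤ volume (Set.Icc (1:ℝ) T) :=
              measure_mono (fun t ht => ht.1)
          _ = ENNReal.ofReal (T-1) := Real.volume_Icc
      have h4 := ENNReal.toReal_le_of_le_ofReal (by linarith) hvle
      rw [hF]
      rw [div_le_one (by linarith)]
      linarith
    · show (volume {t : ℝ | t ∈ Set.Icc 1 T ∧ (t, θ) ∈ A}).toReal / T ≤ 1
      rw [hempty T hT]
      simp
  have hbdd_ge : IsBoundedUnder (· ≥ ·) atTop F :=
    ⟨0, Filter.eventually_map.mpr (Filter.Eventually.of_forall hF0)⟩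
  have hbdd_le : IsBoundedUnder (· ≤ ·) atTop F :=
    ⟨1, Filter.eventually_map.mpr (Filter.Eventually.of_forall hF1)⟩
  have hlow : 0 ≤ liminf F atTop :=
    le_liminf_of_le hbdd_le.isCoboundedUnder_ge (Eventually.of_forall hF0)
  have hupper : ∀ ε : ℝ, 0 < ε → liminf F atTop ≤ ε := by
    intro ε hε
    have hfreq : ∃ᶠ n : ℕ in atTop, g n θ < ENNReal.ofReal ε :=
      frequently_lt_of_liminf_lt (by isBoundedDefault)
        (by rw [hθ]; exact ENNReal.ofReal_pos.mpr hε)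
    have hfreq2 : ∃ᶠ n : ℕ in atTop, F ((n:ℝ)+2) ≤ ε := by
      apply hfreq.mono
      intro n hn
      have hVlt : volume {t : ℝ | t ∈ Set.Icc 1 ((n:ℝ)+2) ∧ (t, θ) ∈ A} ≤
          ((n:ℝ≥0∞)+1) * ENNReal.ofReal ε := by
        have h5 := mul_le_mul_right hn.le ((n:ℝ≥0∞)+1)
        rwa [hg, ← mul_assoc, ENNReal.mul_inv_cancel (hne n) (hnetop n), one_mul] at h5
      have hVle : (volume {t : ℝ | t ∈ Set.Icc 1 ((n:ℝ)+2) ∧ (t, θ) ∈ A}).toReal ≤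
          ((n:ℝ)+1) * ε := by
        apply ENNReal.toReal_le_of_le_ofReal (by positivity)
        rw [ENNReal.ofReal_mul (by positivity)]
        have : ENNReal.ofReal ((n:ℝ)+1) = (n:ℝ≥0∞)+1 := by
          rw [ENNReal.ofReal_add (by positivity) zero_le_one]; simp
        rw [this]
        exact hVlt
      rw [hF]
      rw [div_le_iff₀ (by positivity)]
      calc (volume {t : ℝ | t ∈ Set.Icc 1 ((n:ℝ)+2) ∧ (t, θ) ∈ A}).toReal ≤ ((n:ℝ)+1)*ε := hVle
        _ ≤ ε * ((n:ℝ)+2) := by nlinarith [Nat.cast_nonneg (α := ℝ) n]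
    have hfreqT : ∃ᶠ T : ℝ in atTop, F T ≤ ε :=
      (Filter.Tendsto.frequently
        (tendsto_atTop_add_const_right atTop 2 tendsto_natCast_atTop_atTop) hfreq2)
    exact liminf_le_of_frequently_le hfreqT hbdd_ge
  have hup : liminf F atTop ≤ 0 :=
    le_of_forall_pos_le_add (fun ε hε => by simpa using hupper ε hε)
  exact le_antisymm hup hlow
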